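/- arXiv:2112.07297 — 5 statements merged into one kernel-verified Lean document; each statement's English description precedes it below -/
import Mathlib

section
/- For any even integer s = 2ℓ with ℓ ≥ 1, the sum over i ≥ 0 of C(s, ℓ-2i) for i ≥ 1, plus C(s-1, ℓ-1), equals 2^(s-2). Equivalently: Σ_{i≥1} C(s, ℓ-2i) + C(s-1, ℓ-1) = 2^(s-2). -/
open Finset

private lemma lemF (n : ℕ) (r : ℕ) (hr : r ≤ 1) (k : ℕ) :
    ∑ i ∈ Finset.range k, (n + 1).choose (r + 2 * i) =
      ∑ j ∈ Finset.range (2 * k + r - 1), n.choose j := by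
  induction k with
  | zero => interval_cases r <;> simp
  | succ k ih =>
    rw [Finset.sum_range_succ, ih]
    rcases Nat.eq_zero_or_pos (2 * k + r) with h | h
    · have hk : k = 0 := by omega
      have hr0 : r = 0 := by omega
      subst hk; subst hr0; simp
    · have h1 : 2 * (k + 1) + r - 1 = (2 * k + r - 1) + 1 + 1 := by omega
      rw [h1, Finset.sum_range_succ, Finset.sum_range_succ, add_assoc]
      congr 1
      have h4 : r + 2 * k = (2 * k + r - 1) + 1 := by omega
      rw [h4, Nat.choose_succ_succ]

/-- For any even integer `s = 2ℓ` with `ℓ ≥ 1`,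
`∑_{i ≥ 1} C(s, ℓ-2i) + C(s-1, ℓ-1) = 2^(s-2)`.
Terms with negative lower index vanish (encoded by the `if` guard). -/
theorem sum_choose_even_cycle_ell (ℓ s : ℕ) (hℓ : 1 ≤ ℓ) (hs : s = 2 * ℓ) :
    (∑ i ∈ Finset.Icc 1 s, if 2 * i ≤ ℓ then s.choose (ℓ - 2 * i) else 0) +
      (s - 1).choose (ℓ - 1) = 2 ^ (s - 2) := by
  subst hs
  set k := ℓ / 2 with hk
  set r := ℓ % 2 with hr
  have hℓkr : ℓ = 2 * k + r := by omega
  have hr1 : r ≤ 1 := by omega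
  -- Step 1: reduce the guarded sum to a sum over Icc 1 k
  have step1 : (∑ i ∈ Finset.Icc 1 (2 * ℓ), if 2 * i ≤ ℓ then (2 * ℓ).choose (ℓ - 2 * i) else 0)
      = ∑ i ∈ Finset.Icc 1 k, (2 * ℓ).choose (ℓ - 2 * i) := by
    rw [← Finset.sum_subset (Finset.Icc_subset_Icc_right (by omega : k ≤ 2 * ℓ))]
    · apply Finset.sum_congr rfl
      intro i hi
      simp only [Finset.mem_Icc] at hi
      rw [if_pos (by omega)]
    · intro i hi hni
      simp only [Finset.mem_Icc] at hi hni
      rw [if_neg (by omega)]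
  -- Step 2: Icc 1 k to range k
  have step2 : ∑ i ∈ Finset.Icc 1 k, (2 * ℓ).choose (ℓ - 2 * i)
      = ∑ j ∈ Finset.range k, (2 * ℓ).choose (ℓ - 2 * (1 + j)) := by
    rw [← Finset.Ico_add_one_right_eq_Icc, Finset.sum_Ico_eq_sum_range]
    simp
  -- Step 3: reflect
  have step3 : ∑ j ∈ Finset.range k, (2 * ℓ).choose (ℓ - 2 * (1 + j))
      = ∑ j ∈ Finset.range k, (2 * ℓ).choose (r + 2 * j) := by
    rw [← Finset.sum_range_reflect]
    apply Finset.sum_congr rfl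
    intro j hj
    simp only [Finset.mem_range] at hj
    congr 1
    omega
  -- Step 4: apply lemF with n = 2ℓ - 1
  have h2ℓ : 2 * ℓ = (2 * ℓ - 1) + 1 := by omega
  have step4 := lemF (2 * ℓ - 1) r hr1 k
  rw [show 2 * ℓ - 1 + 1 = 2 * ℓ from by omega,
    show 2 * k + r - 1 = ℓ - 1 from by omega] at step4
  rw [step1, step2, step3, step4]
  have hℓ1 : ℓ = (ℓ - 1) + 1 := by omega
  rw [← Finset.sum_range_succ (fun j => (2 * ℓ - 1).choose j) (ℓ - 1)]
  have := Nat.sum_range_choose_halfway (ℓ - 1)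
  have h2 : 2 * (ℓ - 1) + 1 = 2 * ℓ - 1 := by omega
  rw [h2] at this
  rw [show (ℓ - 1) + 1 = ℓ from by omega] at this ⊢
  rw [this]
  have : 4 ^ (ℓ - 1) = 2 ^ (2 * ℓ - 2) := by
    rw [show (4:ℕ) = 2 ^ 2 from rfl, ← pow_mul]
    congr 1
    omega
  exact this
end

section
/- For integers s ≥ 1, q ≥ 2 and d ≥ 0, define k(s,d,q) = Σ_{j≥0} (-1)^j C(s-1, j) C(s-1+d-(q-1)j, s-1) (where binomial coefficients with negative upper argument are taken to be 0). Then k(s, d, 3) = Σ_{i≥0} C(s, d-2i). -/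
open Finset

lemma pascal_abel (n : ℕ) (f : ℕ → ℤ) :
    ∑ j ∈ range (n+2), (-1:ℤ)^j * ((n+1).choose j : ℤ) * f j
      = ∑ j ∈ range (n+1), (-1:ℤ)^j * (n.choose j : ℤ) * (f j - f (j+1)) := by
  rw [Finset.sum_range_succ' _ (n+1)]
  have h1 : ∀ j, (-1:ℤ)^(j+1) * ((n+1).choose (j+1) : ℤ) * f (j+1)
      = -((-1:ℤ)^j * (n.choose j : ℤ) * f (j+1)) - (-1:ℤ)^j * (n.choose (j+1) : ℤ) * f (j+1) := by
    intro j
    rw [Nat.choose_succ_succ]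
    push_cast
    ring
  simp only [h1, mul_sub]
  rw [Finset.sum_sub_distrib, Finset.sum_sub_distrib]
  have h2 : ∑ j ∈ range (n+1), (-1:ℤ)^j * (n.choose j : ℤ) * f j
      = (∑ j ∈ range n, (-1:ℤ)^(j+1) * (n.choose (j+1) : ℤ) * f (j+1))
        + (-1:ℤ)^0 * (n.choose 0 : ℤ) * f 0 := Finset.sum_range_succ' _ n
  have h3 : ∑ j ∈ range (n+1), (-1:ℤ)^j * (n.choose (j+1) : ℤ) * f (j+1)
      = ∑ j ∈ range n, (-1:ℤ)^j * (n.choose (j+1) : ℤ) * f (j+1) := by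
    rw [Finset.sum_range_succ, Nat.choose_succ_self]
    simp
  rw [h2, h3]
  have h5 : ∑ x ∈ range n, (-1:ℤ)^(x+1) * (n.choose (x+1):ℤ) * f (x+1)
      = -∑ x ∈ range n, (-1:ℤ)^x * (n.choose (x+1):ℤ) * f (x+1) := by
    rw [← Finset.sum_neg_distrib]
    exact Finset.sum_congr rfl fun x _ => by ring
  simp only [mul_neg, neg_mul, Finset.sum_neg_distrib, h5, Nat.choose_zero_right]
  ring

lemma T_split (n d j : ℕ) :
    (if 2*j ≤ n+1+d then ((n+1+d-2*j).choose (n+1) : ℤ) else 0)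
      - (if 2*(j+1) ≤ n+1+d then ((n+1+d-2*(j+1)).choose (n+1) : ℤ) else 0)
    = (if 2*j ≤ n+d then ((n+d-2*j).choose n : ℤ) else 0)
      + (if 2*j+1 ≤ n+d then ((n+d-1-2*j).choose n : ℤ) else 0) := by
  rcases le_or_gt (2*j+1) (n+d) with h | h
  · -- main case
    obtain ⟨b, hb⟩ : ∃ b, n + d = 2*j + 1 + b := ⟨n + d - (2*j+1), by omega⟩
    rw [if_pos (by omega), if_pos (by omega), if_pos (by omega), if_pos (by omega),
      show n+1+d-2*j = b+2 by omega, show n+1+d-2*(j+1) = b by omega,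
      show n+d-2*j = b+1 by omega, show n+d-1-2*j = b by omega]
    have : (b+2).choose (n+1) = b.choose (n+1) + ((b+1).choose n + b.choose n) := by
      rw [Nat.choose_succ_succ (b+1), Nat.choose_succ_succ b]
      ring
    rw [this]
    push_cast
    ring
  · rcases le_or_gt (2*j) (n+d) with h2 | h2
    · -- 2j = n+d
      rw [if_pos (by omega), if_neg (by omega), if_pos (by omega), if_neg (by omega),
        show n+1+d-2*j = 1 by omega, show n+d-2*j = 0 by omega]
      cases n with
      | zero => simp
      | succ m =>
        rw [Nat.choose_eq_zero_of_lt (by omega), Nat.choose_eq_zero_of_lt (by omega)]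
        simp
    · rcases le_or_gt (2*j) (n+1+d) with h3 | h3
      · -- 2j = n+1+d
        rw [if_pos h3, if_neg (by omega), if_neg (by omega), if_neg (by omega),
          show n+1+d-2*j = 0 by omega, Nat.choose_eq_zero_of_lt (by omega)]
        simp
      · rw [if_neg (by omega), if_neg (by omega), if_neg (by omega), if_neg (by omega)]
        simp

lemma F_eq (n : ℕ) : ∀ d : ℕ,
    ∑ j ∈ range (n+1), (-1:ℤ)^j * (n.choose j : ℤ) *
        (if 2*j ≤ n+d then ((n+d-2*j).choose n : ℤ) else 0)
      = ∑ k ∈ range (d+1), (n.choose k : ℤ) := by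
  induction n with
  | zero =>
    intro d
    rw [Finset.sum_range_one, Finset.sum_eq_single 0]
    · simp
    · intro k _ hk
      rw [Nat.choose_eq_zero_of_lt (by omega)]
      simp
    · simp
  | succ n ih =>
    intro d
    rw [show n+1+1 = n+2 from rfl, pascal_abel n
      (fun j => if 2*j ≤ n+1+d then ((n+1+d-2*j).choose (n+1) : ℤ) else 0)]
    have step : ∑ j ∈ range (n+1), (-1:ℤ)^j * (n.choose j : ℤ) *
        ((if 2*j ≤ n+1+d then ((n+1+d-2*j).choose (n+1) : ℤ) else 0)
          - (if 2*(j+1) ≤ n+1+d then ((n+1+d-2*(j+1)).choose (n+1) : ℤ) else 0))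
        = ∑ j ∈ range (n+1), ((-1:ℤ)^j * (n.choose j : ℤ) *
            (if 2*j ≤ n+d then ((n+d-2*j).choose n : ℤ) else 0)
          + (-1:ℤ)^j * (n.choose j : ℤ) *
            (if 2*j+1 ≤ n+d then ((n+d-1-2*j).choose n : ℤ) else 0)) := by
      refine Finset.sum_congr rfl fun j _ => ?_
      rw [T_split n d j]
      ring
    rw [step, Finset.sum_add_distrib, ih d]
    have G : ∑ j ∈ range (n+1), (-1:ℤ)^j * (n.choose j : ℤ) *
        (if 2*j+1 ≤ n+d then ((n+d-1-2*j).choose n : ℤ) else 0)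
        = ∑ k ∈ range d, (n.choose k : ℤ) := by
      cases d with
      | zero =>
        rw [Finset.range_zero, Finset.sum_empty]
        apply Finset.sum_eq_zero
        intro j _
        split_ifs with hg
        · rw [Nat.choose_eq_zero_of_lt (show n+0-1-2*j < n by omega), Nat.cast_zero, mul_zero]
        · rw [mul_zero]
      | succ e =>
        have := ih e
        rw [← this]
        refine Finset.sum_congr rfl fun j _ => ?_
        congr 1
        refine if_congr (by omega) ?_ rfl
        rw [show n+(e+1)-1-2*j = n+e-2*j from by omega]
    rw [G]
    -- now: ∑_{k≤d} C(n,k) + ∑_{k<d} C(n,k) = ∑_{k≤d} C(n+1,k)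
    rw [Finset.sum_range_succ' (fun k => ((n+1).choose k : ℤ)) d,
      Finset.sum_range_succ' (fun k => ((n).choose k : ℤ)) d]
    simp only [Nat.choose_succ_succ, Nat.choose_zero_right]
    push_cast
    rw [Finset.sum_add_distrib]
    ring

lemma rhs_eq (m : ℕ) : ∀ d : ℕ,
    ∑ i ∈ range (d+1), (if 2*i ≤ d then ((m+1).choose (d-2*i) : ℤ) else 0)
      = ∑ k ∈ range (d+1), (m.choose k : ℤ) := by
  intro d
  induction d using Nat.strong_induction_on with
  | _ d ih =>
    match d with
    | 0 => simp
    | 1 =>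
      simp [Finset.sum_range_succ, Nat.choose_one_right]; ring
    | (e+2) =>
      rw [Finset.sum_range_succ' _ (e+2)]
      have h1 : ∑ i ∈ range (e+2),
          (if 2*(i+1) ≤ e+2 then ((m+1).choose (e+2-2*(i+1)) : ℤ) else 0)
          = ∑ i ∈ range (e+1), (if 2*i ≤ e then ((m+1).choose (e-2*i) : ℤ) else 0) := by
        rw [Finset.sum_range_succ, if_neg (by omega), add_zero]
        refine Finset.sum_congr rfl fun i _ => ?_
        refine if_congr (by omega) ?_ rfl
        rw [show e+2-2*(i+1) = e-2*i from by omega]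
      rw [h1, ih e (by omega), if_pos (by omega), Nat.sub_zero,
        Finset.sum_range_succ _ (e+2), Finset.sum_range_succ _ (e+1),
        Nat.choose_succ_succ (m) (e+1)]
      push_cast [Nat.choose_succ_succ m (e+1)]
      ring

/-- With `k(s,d,q) = ∑_{j≥0} (-1)^j C(s-1,j) C(s-1+d-(q-1)j, s-1)` (binomials with
negative upper argument being `0`, encoded by the `if` guard), one has
`k(s, d, 3) = ∑_{i≥0} C(s, d-2i)` for all `s ≥ 1`, `d ≥ 0`. -/
theorem torus_hilbert_q_three (s d : ℕ) (hs : 1 ≤ s) :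
    (∑ j ∈ Finset.range s, (-1 : ℤ) ^ j * (s - 1).choose j *
        (if (3 - 1) * j ≤ s - 1 + d then ((s - 1 + d - (3 - 1) * j).choose (s - 1) : ℤ) else 0))
      = ∑ i ∈ Finset.range (d + 1), if 2 * i ≤ d then (s.choose (d - 2 * i) : ℤ) else 0 := by
  obtain ⟨n, rfl⟩ : ∃ n, s = n + 1 := ⟨s - 1, by omega⟩
  simp only [Nat.add_sub_cancel, show (3:ℕ) - 1 = 2 from rfl]
  rw [F_eq n d, rhs_eq n d]
end

section
/- Fix integers q ≥ 3 and s ≥ 2, and let d ≥ 1 with d ≤ (q-2)(s-1) - 1. Write d = k(q-2) + ℓ with integers k ≥ 0 and 1 ≤ ℓ ≤ q-2 (this representation exists and is unique). Then the quantity δ(d) = (q-1)^{s-(k+2)} (q-1-ℓ) is strictly decreasing as a function of d on the range 1 ≤ d ≤ (q-2)(s-1)-1, and δ((q-2)(s-1)-1) > 1. -/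
private lemma rep_div (a k ℓ : ℕ) (h1 : 1 ≤ ℓ) (h2 : ℓ ≤ a + 1) :
    (k * (a + 1) + ℓ - 1) / (a + 1) = k ∧ (k * (a + 1) + ℓ - 1) % (a + 1) = ℓ - 1 := by
  have e : k * (a + 1) + ℓ - 1 = (ℓ - 1) + k * (a + 1) := by
    generalize k * (a + 1) = K
    omega
  constructor
  · rw [e, Nat.add_mul_div_right _ _ (by omega : 0 < a + 1), Nat.div_eq_of_lt (by omega)]
    omega
  · rw [e, Nat.add_mul_mod_self_right, Nat.mod_eq_of_lt (by omega)]

private lemma rep_uniq {a k ℓ k' ℓ' : ℕ} (h1 : 1 ≤ ℓ) (h2 : ℓ ≤ a + 1)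
    (h1' : 1 ≤ ℓ') (h2' : ℓ' ≤ a + 1) (h : k * (a + 1) + ℓ = k' * (a + 1) + ℓ') :
    k = k' ∧ ℓ = ℓ' := by
  have A := rep_div a k ℓ h1 h2
  have B := rep_div a k' ℓ' h1' h2'
  rw [h] at A
  have hk : k = k' := A.1.symm.trans B.1
  subst hk
  refine ⟨rfl, ?_⟩
  have h' := h
  generalize k * (a + 1) = K at h'
  omega

private lemma rep_lt {a k ℓ k' ℓ' : ℕ} (h1 : 1 ≤ ℓ) (h2 : ℓ ≤ a + 1)
    (h1' : 1 ≤ ℓ') (h2' : ℓ' ≤ a + 1) (h : k * (a + 1) + ℓ < k' * (a + 1) + ℓ') :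
    k < k' ∨ (k = k' ∧ ℓ < ℓ') := by
  rcases lt_trichotomy k k' with hc | hc | hc
  · exact Or.inl hc
  · subst hc
    right
    refine ⟨rfl, ?_⟩
    have h' := h
    generalize k * (a + 1) = K at h'
    omega
  · exfalso
    have hm : (k' + 1) * (a + 1) ≤ k * (a + 1) := Nat.mul_le_mul_right _ (by omega)
    rw [add_mul, one_mul] at hm
    have h' := h
    generalize k * (a + 1) = K at hm h'
    generalize k' * (a + 1) = K' at hm h'
    omega

private lemma rep_bound {a t k ℓ : ℕ} (h1 : 1 ≤ ℓ)
    (h : k * (a + 1) + ℓ ≤ (a + 1) * (t + 1) - 1) : k ≤ t := by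
  by_contra hc
  have hm : (t + 1) * (a + 1) ≤ k * (a + 1) := Nat.mul_le_mul_right _ (by omega)
  rw [mul_comm (t + 1)] at hm
  generalize k * (a + 1) = K at hm h
  generalize (a + 1) * (t + 1) = P at hm h
  omega

/-- For `q ≥ 3`, `s ≥ 2` and `1 ≤ d ≤ (q-2)(s-1) - 1`:
(a) the representation `d = k(q-2) + ℓ` with `k ≥ 0`, `1 ≤ ℓ ≤ q-2` exists and is unique;
(b) the quantity `δ(d) = (q-1)^(s-(k+2)) (q-1-ℓ)` is strictly decreasing in `d` on this range;
(c) its value at `d = (q-2)(s-1)-1` is `> 1`. -/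
theorem torus_min_dist_formula_monotone (q s : ℕ) (hq : 3 ≤ q) (hs : 2 ≤ s) :
    (∀ d, 1 ≤ d → d ≤ (q - 2) * (s - 1) - 1 →
      ∃! kl : ℕ × ℕ, 1 ≤ kl.2 ∧ kl.2 ≤ q - 2 ∧ d = kl.1 * (q - 2) + kl.2) ∧
    (∀ d₁ d₂ k₁ ℓ₁ k₂ ℓ₂, 1 ≤ d₁ → d₁ < d₂ → d₂ ≤ (q - 2) * (s - 1) - 1 →
      d₁ = k₁ * (q - 2) + ℓ₁ → 1 ≤ ℓ₁ → ℓ₁ ≤ q - 2 →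
      d₂ = k₂ * (q - 2) + ℓ₂ → 1 ≤ ℓ₂ → ℓ₂ ≤ q - 2 →
      (q - 1) ^ (s - (k₂ + 2)) * (q - 1 - ℓ₂) < (q - 1) ^ (s - (k₁ + 2)) * (q - 1 - ℓ₁)) ∧
    (∀ k ℓ, (q - 2) * (s - 1) - 1 = k * (q - 2) + ℓ → 1 ≤ ℓ → ℓ ≤ q - 2 →
      1 < (q - 1) ^ (s - (k + 2)) * (q - 1 - ℓ)) := by
  obtain ⟨a, rfl⟩ : ∃ a, q = a + 3 := ⟨q - 3, by omega⟩
  obtain ⟨t, rfl⟩ : ∃ t, s = t + 2 := ⟨s - 2, by omega⟩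
  simp only [show a + 3 - 2 = a + 1 by omega, show a + 3 - 1 = a + 2 by omega,
    show t + 2 - 1 = t + 1 by omega]
  refine ⟨?_, ?_, ?_⟩
  · -- existence and uniqueness
    intro d hd1 hd2
    set D := (d - 1) / (a + 1) with hD
    set M := (d - 1) % (a + 1) with hM
    have hdm : (a + 1) * D + M = d - 1 := Nat.div_add_mod _ _
    have hMlt : M < a + 1 := Nat.mod_lt _ (by omega)
    have heq : d = D * (a + 1) + (M + 1) := by
      have : D * (a + 1) + (M + 1) = ((a + 1) * D + M) + 1 := by ring
      rw [this, hdm]; omega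
    refine ⟨⟨D, M + 1⟩, ⟨by omega, by omega, heq⟩, ?_⟩
    rintro ⟨k', ℓ'⟩ ⟨h1', h2', h3'⟩
    have := rep_uniq h1' h2' (show 1 ≤ M + 1 by omega) (by omega)
      (h3' ▸ heq : k' * (a + 1) + ℓ' = D * (a + 1) + (M + 1))
    simp only [Prod.mk.injEq]
    exact this
  · -- strict monotonicity
    intro d₁ d₂ k₁ ℓ₁ k₂ ℓ₂ h1 hlt hle e₁ l1 u1 e₂ l2 u2
    rw [show t + 2 - (k₁ + 2) = t - k₁ by omega, show t + 2 - (k₂ + 2) = t - k₂ by omega]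
    have hk2t : k₂ ≤ t := rep_bound l2 (e₂ ▸ hle)
    have hcase := rep_lt l1 u1 l2 u2 (by rw [← e₁, ← e₂]; exact hlt)
    rcases hcase with hc | ⟨hc, hc'⟩
    · calc (a + 2) ^ (t - k₂) * (a + 2 - ℓ₂)
          < (a + 2) ^ (t - k₂) * (a + 2) :=
            mul_lt_mul_of_pos_left (by omega) (pow_pos (by omega) _)
        _ = (a + 2) ^ (t - k₂ + 1) := (pow_succ _ _).symm
        _ ≤ (a + 2) ^ (t - k₁) := Nat.pow_le_pow_right (by omega) (by omega)
        _ ≤ (a + 2) ^ (t - k₁) * (a + 2 - ℓ₁) := Nat.le_mul_of_pos_right _ (by omega)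
    · subst hc
      exact mul_lt_mul_of_pos_left (by omega) (pow_pos (by omega) _)
  · -- value at the top degree
    intro k ℓ h hl hu
    rw [show t + 2 - (k + 2) = t - k by omega]
    by_cases hc : ℓ ≤ a
    · calc 1 < a + 2 - ℓ := by omega
        _ ≤ (a + 2) ^ (t - k) * (a + 2 - ℓ) :=
            Nat.le_mul_of_pos_left _ (pow_pos (by omega) _)
    · have hℓ : ℓ = a + 1 := by omega
      subst hℓ
      have hP : 1 ≤ (a + 1) * (t + 1) := Nat.mul_pos (by omega) (by omega)
      have heq : (k + 1) * (a + 1) + 1 = (t + 1) * (a + 1) := by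
        rw [add_mul, one_mul, mul_comm (t + 1)]
        generalize k * (a + 1) = K at h
        generalize hP' : (a + 1) * (t + 1) = P at h hP
        omega
      have hkt : k + 1 < t + 1 := by
        refine Nat.lt_of_mul_lt_mul_right (a := a + 1) ?_
        generalize (k + 1) * (a + 1) = X at heq ⊢
        generalize (t + 1) * (a + 1) = Y at heq ⊢
        omega
      have hsub : (t - k) * (a + 1) = 1 := by
        rw [show t - k = (t + 1) - (k + 1) by omega, Nat.sub_mul]
        omega
      have hd : a + 1 ∣ 1 := Dvd.intro_left _ hsub
      have ha : a = 0 := by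
        have := Nat.le_of_dvd one_pos hd
        omega
      subst ha
      simp only [Nat.zero_add, mul_one] at hsub ⊢
      rw [hsub]
      norm_num
end

section
/- Let G be a connected bipartite graph with parts of sizes a and b (so n = a + b vertices) and at least one edge, over a finite field with q elements. Then the projective algebraic toric set X parameterized by the edges of G satisfies |X| = (q-1)^{a+b-2}. -/
lemma toric_walk {n : ℕ} {G : SimpleGraph (Fin n)} (c : G.Coloring (Fin 2))
    {M : Type*} [CommGroup M] (z : Fin n → M) (lam : M)
    (hz : ∀ i j, G.Adj i j → z i * z j = lam) (μ : M) :
    ∀ {u v : Fin n}, G.Walk u v →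
      z u = (if c u = 0 then μ else lam * μ⁻¹) →
      z v = (if c v = 0 then μ else lam * μ⁻¹) := by
  have h2 : ∀ t : Fin 2, t ≠ 0 → t = 1 := by decide
  intro u v w
  induction w with
  | nil => exact id
  | @cons u x v h p ih =>
    intro hu
    apply ih
    have hcol := c.valid h
    have hzx : z x = (z u)⁻¹ * lam := eq_inv_mul_iff_mul_eq.mpr (hz u x h)
    by_cases hcu : c u = 0
    · rw [if_pos hcu] at hu
      have hcx : ¬ c x = 0 := fun h0 => hcol (by rw [hcu, h0])
      rw [if_neg hcx, hzx, hu]; exact mul_comm _ _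
    · rw [if_neg hcu] at hu
      have hcx : c x = 0 := by
        by_contra h0
        exact hcol ((h2 _ hcu).trans (h2 _ h0).symm)
      rw [if_pos hcx, hzx, hu]; group

/-- Let `G` be a connected bipartite graph with parts of sizes `a` and `b` (so
`n = a + b` vertices) and at least one edge, over a finite field `K` with `q` elements.
The projective algebraic toric set `X` parameterized by the edges of `G` — the image
of the torus under the map whose coordinate at the edge `{i,j}` is `x_i x_j` — satisfies
`|X| = (q-1)^(a+b-2)`. -/
theorem card_toric_set_bipartite (K : Type*) [Field K] [Fintype K]
    (n a b : ℕ) (G : SimpleGraph (Fin n)) (hconn : G.Connected)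
    (c : G.Coloring (Fin 2))
    (ha : (Finset.univ.filter fun v => c v = 0).card = a)
    (hb : (Finset.univ.filter fun v => c v = 1).card = b)
    (he : G.edgeSet.Nonempty) :
    Set.ncard
      (Set.range fun x : Fin n → Kˣ =>
        Projectivization.mk K
          (fun e : G.edgeSet =>
            ((Sym2.lift ⟨fun i j => x i * x j, fun i j => mul_comm (x i) (x j)⟩ e.1 : Kˣ) : K))
          (by
            intro h0
            obtain ⟨e, heE⟩ := he
            exact Units.ne_zero _ (congrFun h0 ⟨e, heE⟩)))
      = (Fintype.card K - 1) ^ (a + b - 2) := by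
  classical
  have h2 : ∀ t : Fin 2, t ≠ 0 → t = 1 := by decide
  set q := Fintype.card K with hq
  set vec : (Fin n → Kˣ) → (G.edgeSet → K) := fun x e =>
    ((Sym2.lift ⟨fun i j => x i * x j, fun i j => mul_comm (x i) (x j)⟩ e.1 : Kˣ) : K)
    with hvecdef
  have hvecne : ∀ x, vec x ≠ 0 := by
    intro x h0
    obtain ⟨e, heE⟩ := he
    exact Units.ne_zero _ (congrFun h0 ⟨e, heE⟩)
  set f : (Fin n → Kˣ) → Projectivization K (G.edgeSet → K) :=
    fun x => Projectivization.mk K (vec x) (hvecne x) with hfdef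
  show (Set.range f).ncard = (q - 1) ^ (a + b - 2)
  have hvec_eval : ∀ (x : Fin n → Kˣ) (i j : Fin n) (hij : s(i, j) ∈ G.edgeSet),
      vec x ⟨s(i, j), hij⟩ = ((x i * x j : Kˣ) : K) := by
    intro x i j hij
    simp [hvecdef]
  -- distinguished vertices of the two colors
  have he' := he
  obtain ⟨e0, he0⟩ := he'
  have hex : ∃ v0 v1 : Fin n, c v0 = 0 ∧ c v1 = 1 := by
    induction e0 using Sym2.ind with
    | _ i0 j0 =>
      have hadj : G.Adj i0 j0 := G.mem_edgeSet.1 he0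
      have hcol := c.valid hadj
      by_cases h0 : c i0 = 0
      · exact ⟨i0, j0, h0, h2 _ fun hh => hcol (h0.trans hh.symm)⟩
      · exact ⟨j0, i0, by
          by_contra hh
          exact hcol ((h2 _ h0).trans (h2 _ hh).symm), h2 _ h0⟩
  obtain ⟨v0, v1, hv0, hv1⟩ := hex
  -- the key description of fibers
  have key : ∀ x y : Fin n → Kˣ, f x = f y ↔
      ∃ lm : Kˣ × Kˣ, ∀ i, y i = x i * (if c i = 0 then lm.2 else lm.1 * lm.2⁻¹) := by
    intro x y
    rw [hfdef]
    simp only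
    rw [Projectivization.mk_eq_mk_iff K _ _ (hvecne x) (hvecne y)]
    constructor
    · rintro ⟨aU, haU⟩
      have hedge : ∀ i j : Fin n, G.Adj i j → aU * (y i * y j) = x i * x j := by
        intro i j hij
        have h1 := congrFun haU ⟨s(i, j), G.mem_edgeSet.2 hij⟩
        rw [Pi.smul_apply, hvec_eval, hvec_eval, Units.smul_def] at h1
        exact Units.ext (by push_cast at h1 ⊢; exact h1)
      set z : Fin n → Kˣ := fun i => x i * (y i)⁻¹ with hzdef
      have hz : ∀ i j, G.Adj i j → z i * z j = aU := by
        intro i j hij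
        have hK := congrArg (Units.val) (hedge i j hij)
        apply Units.ext
        simp only [hzdef, Units.val_mul, Units.val_inv_eq_inv_val] at hK ⊢
        have hne : ((y i : K) * y j) ≠ 0 := mul_ne_zero (Units.ne_zero _) (Units.ne_zero _)
        rw [show ((x i : K)) * ((y i : K))⁻¹ * (((x j : K)) * ((y j : K))⁻¹)
            = (((x i : K)) * x j) * (((y i : K)) * y j)⁻¹ by rw [mul_inv]; ring, ← hK,
          mul_inv_cancel_right₀ hne]
      have hzall : ∀ i, z i = if c i = 0 then z v0 else aU * (z v0)⁻¹ := by
        intro i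
        exact ((hconn v0 i).elim fun w =>
          toric_walk c z aU hz (z v0) w (by rw [if_pos hv0]))
      refine ⟨⟨aU⁻¹, (z v0)⁻¹⟩, fun i => ?_⟩
      have hyi : y i = x i * (z i)⁻¹ := by
        apply Units.ext
        simp only [hzdef, Units.val_mul, Units.val_inv_eq_inv_val, mul_inv_rev, inv_inv]
        field_simp
      rw [hyi, hzall i]
      split_ifs
      · rfl
      · simp only
        apply Units.ext
        simp only [Units.val_mul, Units.val_inv_eq_inv_val, mul_inv_rev, inv_inv]
        ring
    · rintro ⟨⟨lam, mu⟩, hy⟩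
      refine ⟨lam⁻¹, ?_⟩
      funext e
      obtain ⟨e, heE⟩ := e
      revert heE
      induction e using Sym2.ind with
      | _ i j =>
        intro heE
        have hadj : G.Adj i j := G.mem_edgeSet.1 heE
        rw [Pi.smul_apply, hvec_eval, hvec_eval, Units.smul_def]
        have hu : lam⁻¹ * (y i * y j) = x i * x j := by
          rw [hy i, hy j]
          apply Units.ext
          have hcol := c.valid hadj
          by_cases h0 : c i = 0
          · have h1 : ¬ c j = 0 := fun hh => hcol (h0.trans hh.symm)
            rw [if_pos h0, if_neg h1]
            simp only [Units.val_mul, Units.val_inv_eq_inv_val]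
            field_simp
          · have h1 : c j = 0 := by
              by_contra hh
              exact hcol ((h2 _ h0).trans (h2 _ hh).symm)
            rw [if_neg h0, if_pos h1]
            simp only [Units.val_mul, Units.val_inv_eq_inv_val]
            field_simp
        have hu' := congrArg (Units.val) hu
        simp only [Units.val_mul, Units.val_inv_eq_inv_val] at hu'
        push_cast
        rw [smul_eq_mul, ← hu']
  -- fibers have cardinality (q-1)^2
  have hcardU : Fintype.card Kˣ = q - 1 := by rw [hq, Fintype.card_units]
  have fiber_card : ∀ x : Fin n → Kˣ,
      (Finset.univ.filter fun y => f y = f x).card = (q - 1) ^ 2 := by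
    intro x
    set g : Kˣ × Kˣ → (Fin n → Kˣ) :=
      fun p i => x i * (if c i = 0 then p.2 else p.1 * p.2⁻¹) with hgdef
    have hginj : Function.Injective g := by
      intro p p' hpp
      have h0 : x v0 * p.2 = x v0 * p'.2 := by
        have h0' := congrFun hpp v0
        simp only [hgdef, hv0, if_pos] at h0'
        simpa using h0'
      have h1 : x v1 * (p.1 * p.2⁻¹) = x v1 * (p'.1 * p'.2⁻¹) := by
        have h1' := congrFun hpp v1
        simp only [hgdef, hv1] at h1'
        rw [if_neg (show ¬(1 : Fin 2) = 0 by decide),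
          if_neg (show ¬(1 : Fin 2) = 0 by decide)] at h1'
        exact h1'
      have hmu : p.2 = p'.2 := mul_left_cancel h0
      have hlam : p.1 = p'.1 := by
        have h3 := mul_left_cancel h1
        rw [hmu] at h3
        exact mul_right_cancel h3
      exact Prod.ext hlam hmu
    have hset : (Finset.univ.filter fun y => f y = f x)
        = Finset.univ.image g := by
      ext y
      simp only [Finset.mem_filter, Finset.mem_univ, true_and, Finset.mem_image]
      constructor
      · intro hxy
        obtain ⟨lm, hlm⟩ := (key x y).1 hxy.symm
        exact ⟨lm, (funext fun i => (hlm i).symm)⟩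
      · rintro ⟨lm, rfl⟩
        exact ((key x (g lm)).2 ⟨lm, fun i => rfl⟩).symm
    rw [hset, Finset.card_image_of_injective _ hginj, Finset.card_univ,
      Fintype.card_prod, hcardU]
    ring
  -- total count
  have hrange_fin : (Set.range f).Finite := Set.finite_range f
  set t : Finset (Projectivization K (G.edgeSet → K)) := hrange_fin.toFinset with htdef
  have hsum : (Finset.univ : Finset (Fin n → Kˣ)).card
      = ∑ p ∈ t, (Finset.univ.filter fun x => f x = p).card := by
    apply Finset.card_eq_sum_card_fiberwise
    intro x _
    rw [htdef, Finset.mem_coe, Set.Finite.mem_toFinset]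
    exact Set.mem_range_self x
  have hsum2 : (Finset.univ : Finset (Fin n → Kˣ)).card = t.card * (q - 1) ^ 2 := by
    rw [hsum, Finset.sum_congr rfl (fun p hp => ?_), Finset.sum_const, smul_eq_mul]
    rw [htdef, Set.Finite.mem_toFinset] at hp
    obtain ⟨x, rfl⟩ := hp
    exact fiber_card x
  have hcard_dom : (Finset.univ : Finset (Fin n → Kˣ)).card = (q - 1) ^ n := by
    rw [Finset.card_univ, Fintype.card_fun, hcardU, Fintype.card_fin]
  -- n = a + b
  have hab : a + b = n := by
    have hsplit := Finset.card_filter_add_card_filter_not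
      (s := (Finset.univ : Finset (Fin n))) (p := fun v => c v = 0)
    have hneg : (Finset.univ.filter fun v => ¬ c v = 0)
        = (Finset.univ.filter fun v => c v = 1) := by
      apply Finset.filter_congr
      intro v _
      constructor
      · exact fun hv => h2 _ hv
      · intro hv h0; rw [hv] at h0; exact absurd h0 (by decide)
    rw [hneg, ha, hb, Finset.card_univ, Fintype.card_fin] at hsplit
    exact hsplit
  -- n ≥ 2
  have hn2 : 2 ≤ n := by
    have hne : v0 ≠ v1 := fun hh => by rw [hh, hv1] at hv0; exact absurd hv0 (by decide)
    have h3 := Fintype.one_lt_card_iff_nontrivial.2 ⟨v0, v1, hne⟩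
    rw [Fintype.card_fin] at h3
    omega
  have hq2 : 2 ≤ q := Fintype.one_lt_card
  have hqpos : 0 < (q - 1) ^ 2 := by
    have : 0 < q - 1 := by omega
    positivity
  rw [Set.ncard_eq_toFinset_card _ hrange_fin]
  apply Nat.eq_of_mul_eq_mul_right hqpos
  rw [← htdef, ← hsum2, hcard_dom, ← pow_add]
  congr 1
  omega
end

section
/- Let ℓ ≥ 1 and s = 2ℓ. Define f(d) = Σ_{i≥0} C(s, d-2i) for 0 ≤ d ≤ ℓ-1, f(d) = 2^{s-2} for d ≥ ℓ-1 (consistently at d = ℓ-1). Then f is nondecreasing on 0 ≤ d ≤ ℓ-1: i.e., for 0 ≤ d ≤ ℓ-2, Σ_{i≥0} C(s, d-2i) ≤ Σ_{i≥0} C(s, d+1-2i), with strict inequality. -/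
lemma choose_lt_succ_of_lt_half {r n : ℕ} (h : r < n / 2) :
    n.choose r < n.choose (r + 1) := by
  have hr : r + 1 < n - r := by omega
  have hpos : 0 < n.choose r := Nat.choose_pos (by omega)
  have he : n.choose (r + 1) * (r + 1) = n.choose r * (n - r) := Nat.choose_succ_right_eq n r
  have : n.choose r * (r + 1) < n.choose (r + 1) * (r + 1) := by
    rw [he]; exact Nat.mul_lt_mul_of_le_of_lt (le_refl _) hr hpos
  exact Nat.lt_of_mul_lt_mul_right this

/-- Strict monotonicity of the Hilbert function (dimension of the ternary code of the
even cycle `C_{2ℓ}`) below the regularity: for `ℓ ≥ 1`, `s = 2ℓ` and `0 ≤ d ≤ ℓ-2`,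
`∑_{i≥0} C(s, d-2i) < ∑_{i≥0} C(s, d+1-2i)` (terms with negative lower index vanish,
encoded by the `if` guards). -/
theorem parity_sum_strict_mono (ℓ s d : ℕ) (hℓ : 1 ≤ ℓ) (hs : s = 2 * ℓ)
    (hd : d ≤ ℓ - 2) :
    (∑ i ∈ Finset.range s, if 2 * i ≤ d then s.choose (d - 2 * i) else 0) <
      ∑ i ∈ Finset.range s, if 2 * i ≤ d + 1 then s.choose (d + 1 - 2 * i) else 0 := by
  have hhalf : s / 2 = ℓ := by omega
  have hdℓ : d < ℓ := by omega
  have key : ∀ i, 2 * i ≤ d →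
      s.choose (d - 2 * i) < s.choose (d + 1 - 2 * i) := by
    intro i hi
    have h1 : d + 1 - 2 * i = (d - 2 * i) + 1 := by omega
    rw [h1]
    exact choose_lt_succ_of_lt_half (by omega)
  apply Finset.sum_lt_sum
  · intro i _
    by_cases hi : 2 * i ≤ d
    · simp only [hi, if_pos, if_pos (by omega : 2 * i ≤ d + 1)]
      exact (key i hi).le
    · simp [hi]
  · refine ⟨0, Finset.mem_range.2 (by omega), ?_⟩
    simp only [Nat.mul_zero, Nat.zero_le, if_pos]
    simpa using key 0 (by omega)
end
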